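/- arXiv:2109.13849 — 3 statements merged into one kernel-verified Lean document; each statement's English description precedes it below -/
import Mathlib

section
/- Let G = Q₄ₘ = ⟨a, b | a^{2m} = e, a^m = b², b⁻¹ab = a⁻¹⟩ be the dicyclic group of order 4m, and let S ⊆ G \ {e} be inverse-closed with S ∩ (G \ ⟨a⟩) nonempty. If ba^i ∈ S for some i, then (ba^i)⁻¹ = b⁻¹a^i, and consequently the vertices e and b² of Cay(G,S) have the same set of neighbours among {ba^j, b⁻¹a^j : j}. Hence, if S ⊄ ⟨a⟩, then Cay(G,S) has two distinct vertices with identical neighbourhoods outside ⟨a⟩-translates, so Cay(G,S) cannot be a non-trivial bipartite distance-regular graph of diameter 3. -/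
open QuaternionGroup

/-- The Cayley graph of a group `G` with connection set `S`. -/
def cayleyGraph {G : Type*} [Group G] (S : Set G) : SimpleGraph G where
  Adj x y := x ≠ y ∧ x * y⁻¹ ∈ S ∧ y * x⁻¹ ∈ S
  symm := ⟨fun x y h => ⟨h.1.symm, h.2.2, h.2.1⟩⟩
  loopless := ⟨fun x h => h.1 rfl⟩

/-- `Γ` is a non-trivial bipartite distance-regular graph of diameter 3 with
intersection array `{k, k−1, k−μ; 1, μ, k}` (so `μ < k − 1`, i.e. non-trivial),
bipartite with part `P`: it is connected, `P` is one side of the bipartition,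
the diameter is 3, every vertex has exactly `k` neighbours, and any two vertices at
distance 2 have exactly `μ` common neighbours. -/
def IsNontrivBipDRG3 {V : Type*} (Γ : SimpleGraph V) (P : Set V) (k μ : ℕ) : Prop :=
  Γ.Connected ∧ (∀ u w, Γ.Adj u w → (u ∈ P ↔ w ∉ P)) ∧
    (∀ u w, Γ.dist u w ≤ 3) ∧ (∃ u w, Γ.dist u w = 3) ∧
    (∀ v, (Γ.neighborSet v).ncard = k) ∧
    (∀ u w, Γ.dist u w = 2 → (Γ.neighborSet u ∩ Γ.neighborSet w).ncard = μ) ∧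
    μ + 1 < k

/-- in the dicyclic group `Q₄ₘ` (Mathlib's `QuaternionGroup m`, with
`b·aⁱ` written `xa i` and `b² = a m` the central involution), let `S` be inverse-closed
with `1 ∉ S` and `xa i ∈ S` for some `i` (so `S ⊄ ⟨a⟩`). Then `(b aⁱ)⁻¹ = b⁻¹ aⁱ`
(i.e. `(xa j)⁻¹ = xa (m + j)`), the vertices `e` and `b²` of `Cay(G,S)` have the same
neighbours among the elements `xa j` (outside `⟨a⟩`), and hence `Cay(G,S)` is not a
non-trivial bipartite distance-regular graph of diameter 3 (with `⟨a⟩` as the part of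
the bipartition containing the identity). -/
theorem stmt_12 (m : ℕ) (hm : 1 ≤ m) (S : Set (QuaternionGroup m))
    (h1 : (1 : QuaternionGroup m) ∉ S) (hinv : ∀ s ∈ S, s⁻¹ ∈ S)
    (i : ZMod (2 * m)) (hi : xa i ∈ S) :
    (∀ j : ZMod (2 * m), (xa j)⁻¹ = xa ((m : ZMod (2 * m)) + j)) ∧
    (∀ j : ZMod (2 * m),
      (cayleyGraph S).Adj 1 (xa j) ↔
        (cayleyGraph S).Adj (a (m : ZMod (2 * m))) (xa j)) ∧
    ¬ ∃ k μ : ℕ, IsNontrivBipDRG3 (cayleyGraph S)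
        (Set.range (a : ZMod (2 * m) → QuaternionGroup m)) k μ := by
  haveI : NeZero (2 * m) := ⟨by omega⟩
  have hneg : -(m : ZMod (2 * m)) = (m : ZMod (2 * m)) := by
    have h2 : ((2 * m : ℕ) : ZMod (2 * m)) = 0 := ZMod.natCast_self _
    rw [Nat.cast_mul] at h2
    push_cast at h2 ⊢
    linear_combination -h2
  have hinvxa : ∀ j : ZMod (2 * m), (xa j)⁻¹ = xa ((m : ZMod (2 * m)) + j) := fun j => rfl
  -- the key adjacency equivalence
  have hadj : ∀ j : ZMod (2 * m),
      (cayleyGraph S).Adj 1 (xa j) ↔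
        (cayleyGraph S).Adj (a (m : ZMod (2 * m))) (xa j) := by
    intro j
    constructor
    · rintro ⟨-, hs1, hs2⟩
      rw [one_mul] at hs1
      rw [inv_one, mul_one] at hs2
      refine ⟨?_, ?_, ?_⟩
      · intro h; cases h
      · show a (m : ZMod (2 * m)) * (xa j)⁻¹ ∈ S
        rw [hinvxa, a_mul_xa]
        simpa using hs2
      · show xa j * (a (m : ZMod (2 * m)))⁻¹ ∈ S
        have : (a (m : ZMod (2 * m)))⁻¹ = a (-(m : ZMod (2 * m))) := rfl
        rw [this, hneg, xa_mul_a]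
        rw [hinvxa] at hs1
        rwa [add_comm]
    · rintro ⟨-, hs1, hs2⟩
      rw [hinvxa, a_mul_xa] at hs1
      simp only [add_sub_cancel_left] at hs1
      have : (a (m : ZMod (2 * m)))⁻¹ = a (-(m : ZMod (2 * m))) := rfl
      rw [this, hneg, xa_mul_a, add_comm] at hs2
      refine ⟨?_, ?_, ?_⟩
      · intro h; cases h
      · show (1 : QuaternionGroup m) * (xa j)⁻¹ ∈ S
        rw [one_mul, hinvxa]
        exact hs2
      · show xa j * (1 : QuaternionGroup m)⁻¹ ∈ S
        rw [inv_one, mul_one]; exact hs1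
  refine ⟨hinvxa, hadj, ?_⟩
  rintro ⟨k, μ, hconn, hbip, -, -, hdeg, hmu, hlt⟩
  set Γ := cayleyGraph S
  set P : Set (QuaternionGroup m) := Set.range (a : ZMod (2 * m) → QuaternionGroup m)
  have hone : (1 : QuaternionGroup m) ∈ P := ⟨0, (one_def).symm⟩
  have ham : a (m : ZMod (2 * m)) ∈ P := ⟨_, rfl⟩
  have hne : (1 : QuaternionGroup m) ≠ a (m : ZMod (2 * m)) := by
    rw [one_def]
    intro h
    have : (0 : ZMod (2 * m)) = (m : ZMod (2 * m)) := by injection h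
    have hd := (ZMod.natCast_eq_zero_iff m (2 * m)).mp this.symm
    have := Nat.le_of_dvd (by omega) hd
    omega
  -- neighbors of 1 and of a m coincide
  have hP : ∀ v, Γ.Adj 1 v ∨ Γ.Adj (a (m : ZMod (2 * m))) v → v ∉ P → True := fun _ _ _ => trivial
  have hnbhd : Γ.neighborSet 1 = Γ.neighborSet (a (m : ZMod (2 * m))) := by
    ext v
    simp only [SimpleGraph.mem_neighborSet]
    cases v with
    | a j =>
      constructor
      · intro h
        exact absurd ((hbip _ _ h).mp hone) (not_not.mpr ⟨j, rfl⟩)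
      · intro h
        exact absurd ((hbip _ _ h).mp ham) (not_not.mpr ⟨j, rfl⟩)
    | xa j => exact hadj j
  -- 1 and a m are at distance 2
  have hadj1 : Γ.Adj 1 (xa i) := by
    refine ⟨?_, ?_, ?_⟩
    · intro h; rw [one_def] at h; cases h
    · show (1 : QuaternionGroup m) * (xa i)⁻¹ ∈ S
      rw [one_mul]; exact hinv _ hi
    · rwa [inv_one, mul_one]
  have hadj2 : Γ.Adj (xa i) (a (m : ZMod (2 * m))) := (Γ.adj_symm ((hadj i).mp hadj1))
  have hnadj : ¬ Γ.Adj 1 (a (m : ZMod (2 * m))) := by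
    intro h
    exact (hbip _ _ h).mp hone ham
  have hdist : Γ.dist 1 (a (m : ZMod (2 * m))) = 2 := by
    have hle : Γ.dist 1 (a (m : ZMod (2 * m))) ≤ 2 := by
      have h := SimpleGraph.dist_le (SimpleGraph.Walk.cons hadj1
        (SimpleGraph.Walk.cons hadj2 SimpleGraph.Walk.nil))
      simpa using h
    have h0 : Γ.dist 1 (a (m : ZMod (2 * m))) ≠ 0 := by
      rw [Ne, SimpleGraph.dist_eq_zero_iff_eq_or_not_reachable]
      push_neg
      exact ⟨hne, ⟨SimpleGraph.Walk.cons hadj1 (SimpleGraph.Walk.cons hadj2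
          SimpleGraph.Walk.nil)⟩⟩
    have h1' : Γ.dist 1 (a (m : ZMod (2 * m))) ≠ 1 := by
      rw [Ne, SimpleGraph.dist_eq_one_iff_adj]
      exact hnadj
    omega
  have := hmu _ _ hdist
  rw [← hnbhd, Set.inter_self, hdeg 1] at this
  omega
end

section
/- Let D be a subset of a finite group H of order n with |D| = k, and suppose that in the group ring Z[H] one has D·D⁻¹ = k·e + μ·(H − e) (i.e., D is an (n,k,μ)-difference set). Then also D⁻¹·D = k·e + μ·(H − e) in Z[H]. -/
open MonoidAlgebra Finset

section Aux
variable {H : Type*} [Group H] [Fintype H] [DecidableEq H]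

private lemma aux_mul_apply_one (x y : MonoidAlgebra ℤ H) :
    (x * y).coeff 1 = ∑ g : H, x.coeff g * y.coeff g⁻¹ := by
  rw [MonoidAlgebra.mul_apply_antidiagonal x y 1
      (Finset.univ.image fun g : H => (g, g⁻¹))
      (by
        intro p
        simp only [Finset.mem_image, Finset.mem_univ, true_and, Prod.ext_iff]
        constructor
        · rintro ⟨g, h1, h2⟩
          rw [← h1, ← h2, mul_inv_cancel]
        · intro hp
          exact ⟨p.1, rfl, inv_eq_of_mul_eq_one_right hp⟩)]
  rw [Finset.sum_image (by intro a _ b _ h; exact (Prod.ext_iff.mp h).1)]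

private lemma aux_Hs_apply (g : H) :
    (∑ h : H, MonoidAlgebra.of ℤ H h).coeff g = 1 := by
  classical
  rw [coeff_sum, Finset.sum_apply']
  simp only [MonoidAlgebra.of_apply, MonoidAlgebra.single_apply]
  simp

omit [DecidableEq H] in
private lemma aux_Hs_mul_of (g : H) :
    (∑ h : H, MonoidAlgebra.of ℤ H h) * MonoidAlgebra.of ℤ H g
      = ∑ h : H, MonoidAlgebra.of ℤ H h := by
  rw [Finset.sum_mul]
  simp only [← map_mul]
  exact Fintype.sum_equiv (Equiv.mulRight g) _ _ (fun h => rfl)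

omit [DecidableEq H] in
private lemma aux_of_mul_Hs (g : H) :
    MonoidAlgebra.of ℤ H g * (∑ h : H, MonoidAlgebra.of ℤ H h)
      = ∑ h : H, MonoidAlgebra.of ℤ H h := by
  rw [Finset.mul_sum]
  simp only [← map_mul]
  exact Fintype.sum_equiv (Equiv.mulLeft g) _ _ (fun h => rfl)

end Aux

/-- in the integral group ring `ℤ[H]` of a finite group `H` of order
`n`, if `D · D⁻¹ = k·e + μ·(H − e)` (i.e. `D` is an `(n,k,μ)`-difference set with
`|D| = k`), then also `D⁻¹ · D = k·e + μ·(H − e)`. -/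
theorem stmt_16 {H : Type*} [Group H] [Fintype H] [DecidableEq H]
    (D : Finset H) (n k μ : ℕ)
    (hn : Fintype.card H = n) (hk : D.card = k)
    (hD : (∑ d ∈ D, MonoidAlgebra.of ℤ H d) * (∑ d ∈ D, MonoidAlgebra.of ℤ H d⁻¹)
        = k • MonoidAlgebra.of ℤ H 1
          + μ • ((∑ h : H, MonoidAlgebra.of ℤ H h) - MonoidAlgebra.of ℤ H 1)) :
    (∑ d ∈ D, MonoidAlgebra.of ℤ H d⁻¹) * (∑ d ∈ D, MonoidAlgebra.of ℤ H d)
        = k • MonoidAlgebra.of ℤ H 1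
          + μ • ((∑ h : H, MonoidAlgebra.of ℤ H h) - MonoidAlgebra.of ℤ H 1) := by
  classical
  simp only [← Nat.cast_smul_eq_nsmul ℤ] at hD ⊢
  set S : MonoidAlgebra ℤ H := ∑ d ∈ D, MonoidAlgebra.of ℤ H d with hS
  set T : MonoidAlgebra ℤ H := ∑ d ∈ D, MonoidAlgebra.of ℤ H d⁻¹ with hT
  set Hs : MonoidAlgebra ℤ H := ∑ h : H, MonoidAlgebra.of ℤ H h with hHs
  -- basic multiplicative facts
  have hHsS : Hs * S = (k : ℤ) • Hs := by
    rw [hS, hHs, Finset.mul_sum]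
    simp only [aux_Hs_mul_of]
    rw [Finset.sum_const, hk, Nat.cast_smul_eq_nsmul]
  have hTHs : T * Hs = (k : ℤ) • Hs := by
    rw [hT, hHs, Finset.sum_mul]
    simp only [aux_of_mul_Hs]
    rw [Finset.sum_const, hk, Nat.cast_smul_eq_nsmul]
  have hone : MonoidAlgebra.of ℤ H (1 : H) = 1 := map_one _
  -- the key algebraic identity b² = k b + μ (k² Hs − b)
  have hbb : (T * S) * (T * S)
      = (k : ℤ) • (T * S) + (μ : ℤ) • (((k : ℤ) * k) • Hs - T * S) := by
    have : (T * S) * (T * S) = T * ((S * T) * S) := by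
      rw [mul_assoc T S (T * S), mul_assoc S T S]
    rw [this, hD]
    simp only [add_mul, smul_mul_assoc, sub_mul, hone, one_mul, hHsS, mul_add,
      mul_smul_comm, mul_sub, hTHs, smul_smul, smul_sub, mul_assoc]
  -- coefficient description of b := T * S
  have hTSrep : T * S = ∑ d1 ∈ D, ∑ d2 ∈ D, MonoidAlgebra.single (d1⁻¹ * d2) (1:ℤ) := by
    rw [hT, hS, Finset.sum_mul]
    refine Finset.sum_congr rfl fun d1 _ => ?_
    rw [Finset.mul_sum]
    refine Finset.sum_congr rfl fun d2 _ => ?_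
    simp [MonoidAlgebra.of_apply, MonoidAlgebra.single_mul_single]
  have hbapp : ∀ g : H, (T * S).coeff g
      = ∑ d1 ∈ D, ∑ d2 ∈ D, (if d1⁻¹ * d2 = g then (1:ℤ) else 0) := by
    intro g
    rw [hTSrep, coeff_sum, Finset.sum_apply']
    refine Finset.sum_congr rfl fun d1 _ => ?_
    rw [coeff_sum, Finset.sum_apply']
    exact Finset.sum_congr rfl fun d2 _ => Finsupp.single_apply
  have hsymm : ∀ g : H, (T * S).coeff g⁻¹ = (T * S).coeff g := by
    intro g
    rw [hbapp, hbapp, Finset.sum_comm]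
    refine Finset.sum_congr rfl fun a _ => Finset.sum_congr rfl fun b _ => ?_
    congr 1
    simp only [eq_iff_iff]
    constructor
    · intro h
      have := congrArg (fun z : H => z⁻¹) h
      simpa [mul_inv_rev] using this
    · intro h
      have := congrArg (fun z : H => z⁻¹) h
      simpa [mul_inv_rev] using this
  have hb1 : (T * S).coeff 1 = (k : ℤ) := by
    rw [hbapp]
    simp only [inv_mul_eq_one, Finset.sum_ite_eq]
    simp [hk]
  have hsum : ∑ g : H, (T * S).coeff g = (k : ℤ) * k := by
    simp only [hbapp]
    rw [Finset.sum_comm]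
    have h2 : ∀ d1 ∈ D, (∑ g : H, ∑ d2 ∈ D, if d1⁻¹ * d2 = g then (1:ℤ) else 0) = (k:ℤ) := by
      intro d1 _
      rw [Finset.sum_comm]
      simp [Finset.sum_ite_eq, hk]
    rw [Finset.sum_congr rfl h2, Finset.sum_const, hk]
    simp [nsmul_eq_mul]
  have hkey : (k : ℤ) * k = k + μ * ((n : ℤ) - 1) := by
    have h := congrArg (fun x => (MonoidAlgebra.lift ℤ ℤ H 1) x) hD
    simp only [map_mul, map_add, map_sub, map_zsmul, map_sum, MonoidAlgebra.lift_of,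
      hS, hT, hHs] at h
    simpa [Finset.sum_const, hk, hn, Finset.card_univ, smul_eq_mul, nsmul_eq_mul] using h
  have e1 : ∑ g : H, (T * S).coeff g * (T * S).coeff g = (k:ℤ)*k + μ * ((k:ℤ)*k - k) := by
    have h := congrArg (fun x : MonoidAlgebra ℤ H => x.coeff 1) hbb
    rw [aux_mul_apply_one] at h
    simp only [hsymm] at h
    rw [coeff_add, Finsupp.add_apply, coeff_smul_apply, coeff_smul_apply, coeff_sub,
      Finsupp.sub_apply, coeff_smul_apply, hb1] at h
    have hHs1 : Hs.coeff 1 = 1 := by rw [hHs]; exact aux_Hs_apply 1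
    rw [hHs1] at h
    rw [h]
    simp [smul_eq_mul]
  have hbc : ∑ g : H, (T * S).coeff g * (if g = 1 then (k:ℤ) else μ)
      = μ * ((k:ℤ)*k) + ((k:ℤ) - μ) * k := by
    have h1 : ∀ g : H, (T * S).coeff g * (if g = 1 then (k:ℤ) else μ)
        = μ * (T * S).coeff g + (if g = 1 then ((k:ℤ) - μ) * (T * S).coeff g else 0) := by
      intro g; by_cases hg : g = 1 <;> simp [hg] <;> ring
    simp only [h1]
    rw [Finset.sum_add_distrib, ← Finset.mul_sum, hsum,
      Finset.sum_ite_eq' Finset.univ (1 : H), if_pos (Finset.mem_univ (1 : H)), hb1]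
  have hcc : ∑ g : H, (if g = 1 then (k:ℤ) else μ) * (if g = 1 then (k:ℤ) else μ)
      = (n:ℤ) * (μ * μ) + ((k:ℤ)*k - μ*μ) := by
    have h1 : ∀ g : H, (if g = 1 then (k:ℤ) else μ) * (if g = 1 then (k:ℤ) else μ)
        = μ * μ + (if g = 1 then (k:ℤ)*k - μ*μ else 0) := by
      intro g; by_cases hg : g = 1 <;> simp [hg]
    simp only [h1]
    rw [Finset.sum_add_distrib, Finset.sum_const, Finset.card_univ, hn,
      Finset.sum_ite_eq' Finset.univ (1 : H), if_pos (Finset.mem_univ (1 : H))]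
    simp [nsmul_eq_mul]
  have hfin : ∑ g : H, ((T * S).coeff g - (if g = 1 then (k:ℤ) else μ))
      * ((T * S).coeff g - (if g = 1 then (k:ℤ) else μ)) = 0 := by
    have expand : ∀ g : H, ((T * S).coeff g - (if g = 1 then (k:ℤ) else μ))
        * ((T * S).coeff g - (if g = 1 then (k:ℤ) else μ))
        = (T * S).coeff g * (T * S).coeff g - 2 * ((T * S).coeff g * (if g = 1 then (k:ℤ) else μ))
          + (if g = 1 then (k:ℤ) else μ) * (if g = 1 then (k:ℤ) else μ) := fun g => by ring
    simp only [expand]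
    rw [Finset.sum_add_distrib, Finset.sum_sub_distrib, e1, ← Finset.mul_sum, hbc, hcc]
    linear_combination (-(μ:ℤ)) * hkey
  have hzero : ∀ g : H, (T * S).coeff g = (if g = 1 then (k:ℤ) else μ) := by
    intro g
    have h := (Finset.sum_eq_zero_iff_of_nonneg
      (fun g _ => mul_self_nonneg _)).mp hfin g (Finset.mem_univ g)
    have h2 := mul_self_eq_zero.mp h
    linarith [h2]
  refine MonoidAlgebra.coeff_injective (Finsupp.ext fun g => ?_)
  rw [coeff_add, Finsupp.add_apply, coeff_smul_apply, coeff_smul_apply, coeff_sub,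
    Finsupp.sub_apply, hzero g]
  have hHsg : Hs.coeff g = 1 := by rw [hHs]; exact aux_Hs_apply g
  rw [hHsg]
  by_cases hg : g = 1 <;>
    simp [hg, eq_comm, MonoidAlgebra.of_apply, MonoidAlgebra.coeff_single, Finsupp.single_apply, smul_eq_mul]
end

section
/- Let G = H ⋊ ⟨c⟩ with c² = e, let T ⊆ H, and set S' = Tc = {tc : t ∈ T}. Suppose S' is inverse-closed in G. Also let G₀ be a group of order 2|H| containing H as an index-2 subgroup, let a ∈ G₀ \ H, and let S = Ta ⊆ G₀ be inverse-closed in G₀. Then the map φ : G₀ → G defined by φ(h) = h and φ(a⁻¹h) = ch for h ∈ H is a graph isomorphism from Cay(G₀, S) to Cay(G, S'). -/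
/-- let `G = H ⋊ ⟨c⟩` with `c² = e` (presented abstractly: `ι : H →* G`
injective, `c ∉ ι(H)`, `G = ι(H) ∪ ι(H)c`), let `T ⊆ H` and `S' = Tc` be
inverse-closed in `G`. Let `G₀` contain `H` as an index-2 subgroup (via `ι₀`, with the
two cosets `ι₀(H)` and `a⁻¹ι₀(H)` for some `a ∉ ι₀(H)`), and let `S = Ta` be
inverse-closed in `G₀`. Then the map `φ` with `φ(h) = h` and `φ(a⁻¹h) = ch` is a graph
isomorphism from `Cay(G₀, S)` to `Cay(G, S')`. -/
theorem stmt_18 {H G G₀ : Type*} [Group H] [Group G] [Group G₀]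
    (ι : H →* G) (hι : Function.Injective ι) (c : G) (hc2 : c * c = 1)
    (hc : c ∉ Set.range ι)
    (hgenG : ∀ g : G, (∃ h, g = ι h) ∨ (∃ h, g = c * ι h))
    (ι₀ : H →* G₀) (hι₀ : Function.Injective ι₀) (a : G₀)
    (ha : a ∉ Set.range ι₀)
    (hgenG₀ : ∀ g : G₀, (∃ h, g = ι₀ h) ∨ (∃ h, g = a⁻¹ * ι₀ h))
    (T : Set H)
    (hS' : ∀ s ∈ (fun t => ι t * c) '' T, s⁻¹ ∈ (fun t => ι t * c) '' T)
    (hS : ∀ s ∈ (fun t => ι₀ t * a) '' T, s⁻¹ ∈ (fun t => ι₀ t * a) '' T) :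
    ∃ φ : G₀ → G, (∀ h, φ (ι₀ h) = ι h) ∧ (∀ h, φ (a⁻¹ * ι₀ h) = c * ι h) ∧
      Function.Bijective φ ∧
      ∀ x y, (cayleyGraph ((fun t => ι₀ t * a) '' T)).Adj x y ↔
        (cayleyGraph ((fun t => ι t * c) '' T)).Adj (φ x) (φ y) := by
  classical
  have hcinv : c⁻¹ = c := inv_eq_of_mul_eq_one_left hc2
  -- cosets are disjoint in G₀
  have hdis₀ : ∀ h h' : H, ι₀ h ≠ a⁻¹ * ι₀ h' := by
    intro h h' he
    have h1 : a * ι₀ h = ι₀ h' := by rw [he]; group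
    exact ha ⟨h' * h⁻¹, by rw [map_mul, map_inv, ← h1]; group⟩
  -- cosets disjoint in G
  have hdis : ∀ h h' : H, ι h ≠ c * ι h' := by
    intro h h' he
    exact hc ⟨h * h'⁻¹, by rw [map_mul, map_inv, he]; group⟩
  set S : Set G₀ := (fun t => ι₀ t * a) '' T with hSdef
  set S' : Set G := (fun t => ι t * c) '' T with hS'def
  -- membership lemmas
  have L1 : ∀ w : H, ι₀ w * a ∈ S ↔ w ∈ T := by
    intro w
    constructor
    · rintro ⟨t, ht, he⟩
      have : ι₀ t = ι₀ w := mul_right_cancel he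
      rwa [← hι₀ this]
    · intro hw; exact ⟨w, hw, rfl⟩
  have L2 : ∀ w : H, ι₀ w ∉ S := by
    rintro w ⟨t, ht, he⟩
    exact ha ⟨t⁻¹ * w, by rw [map_mul, map_inv, ← he]; group⟩
  have L3 : ∀ w : H, a⁻¹ * ι₀ w * a ∉ S := by
    rintro w ⟨t, ht, he⟩
    have h1 : a⁻¹ * ι₀ w = ι₀ t := mul_right_cancel he.symm
    exact ha ⟨w * t⁻¹, by rw [map_mul, map_inv, ← h1]; group⟩
  have M1 : ∀ w : H, ι w * c ∈ S' ↔ w ∈ T := by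
    intro w
    constructor
    · rintro ⟨t, ht, he⟩
      have : ι t = ι w := mul_right_cancel he
      rwa [← hι this]
    · intro hw; exact ⟨w, hw, rfl⟩
  have M2 : ∀ w : H, ι w ∉ S' := by
    rintro w ⟨t, ht, he⟩
    exact hc ⟨t⁻¹ * w, by rw [map_mul, map_inv, ← he]; group⟩
  have M3 : ∀ w : H, c * ι w * c ∉ S' := by
    rintro w ⟨t, ht, he⟩
    have h1 : c * ι w = ι t := mul_right_cancel he.symm
    exact hc ⟨t * w⁻¹, by rw [map_mul, map_inv, ← h1]; group⟩
  have L4 : ∀ w : H, a⁻¹ * ι₀ w ∈ S ↔ w⁻¹ ∈ T := by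
    intro w
    constructor
    · intro hm
      have := hS _ hm
      rw [mul_inv_rev, inv_inv, ← map_inv] at this
      exact (L1 _).1 this
    · intro hw
      have hm : ι₀ w⁻¹ * a ∈ S := (L1 _).2 hw
      have := hS _ hm
      rwa [mul_inv_rev, map_inv, inv_inv] at this
  have M4 : ∀ w : H, c * ι w ∈ S' ↔ w⁻¹ ∈ T := by
    intro w
    constructor
    · intro hm
      have := hS' _ hm
      rw [mul_inv_rev, hcinv, ← map_inv] at this
      exact (M1 _).1 this
    · intro hw
      have hm : ι w⁻¹ * c ∈ S' := (M1 _).2 hw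
      have := hS' _ hm
      rwa [mul_inv_rev, map_inv, inv_inv, hcinv] at this
  -- adjacency simplification
  have adjS : ∀ x y : G₀, (cayleyGraph S).Adj x y ↔ x ≠ y ∧ x * y⁻¹ ∈ S := by
    intro x y
    constructor
    · exact fun h => ⟨h.1, h.2.1⟩
    · intro h
      refine ⟨h.1, h.2, ?_⟩
      have := hS _ h.2
      simpa [mul_inv_rev] using this
  have adjS' : ∀ x y : G, (cayleyGraph S').Adj x y ↔ x ≠ y ∧ x * y⁻¹ ∈ S' := by
    intro x y
    constructor
    · exact fun h => ⟨h.1, h.2.1⟩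
    · intro h
      refine ⟨h.1, h.2, ?_⟩
      have := hS' _ h.2
      simpa [mul_inv_rev] using this
  -- the map
  set φ : G₀ → G := fun g =>
    if hg : ∃ h, g = ι₀ h then ι hg.choose
    else c * ι ((hgenG₀ g).resolve_left hg).choose with hφdef
  have hφ1 : ∀ h, φ (ι₀ h) = ι h := by
    intro h
    have hg : ∃ h', (ι₀ h : G₀) = ι₀ h' := ⟨h, rfl⟩
    simp only [hφdef, dif_pos hg]
    exact congrArg ι (hι₀ hg.choose_spec).symm
  have hφ2 : ∀ h, φ (a⁻¹ * ι₀ h) = c * ι h := by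
    intro h
    have hg : ¬∃ h', (a⁻¹ * ι₀ h : G₀) = ι₀ h' := by
      rintro ⟨h', he⟩
      exact hdis₀ h' h he.symm
    simp only [hφdef, dif_neg hg]
    have hspec := ((hgenG₀ (a⁻¹ * ι₀ h)).resolve_left hg).choose_spec
    have : ι₀ h = ι₀ ((hgenG₀ (a⁻¹ * ι₀ h)).resolve_left hg).choose :=
      mul_left_cancel hspec
    rw [← hι₀ this]
  -- bijectivity
  have hinj : Function.Injective φ := by
    intro x y hxy
    rcases hgenG₀ x with ⟨h₁, rfl⟩ | ⟨h₁, rfl⟩ <;>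
      rcases hgenG₀ y with ⟨h₂, rfl⟩ | ⟨h₂, rfl⟩
    · rw [hφ1, hφ1] at hxy; rw [hι hxy]
    · rw [hφ1, hφ2] at hxy; exact absurd hxy (hdis h₁ h₂)
    · rw [hφ2, hφ1] at hxy; exact absurd hxy.symm (hdis h₂ h₁)
    · rw [hφ2, hφ2] at hxy
      rw [hι (mul_left_cancel hxy)]
  have hsurj : Function.Surjective φ := by
    intro g
    rcases hgenG g with ⟨h, rfl⟩ | ⟨h, rfl⟩
    · exact ⟨ι₀ h, hφ1 h⟩
    · exact ⟨a⁻¹ * ι₀ h, hφ2 h⟩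
  refine ⟨φ, hφ1, hφ2, ⟨hinj, hsurj⟩, ?_⟩
  intro x y
  rw [adjS, adjS']
  rcases hgenG₀ x with ⟨h₁, rfl⟩ | ⟨h₁, rfl⟩ <;>
    rcases hgenG₀ y with ⟨h₂, rfl⟩ | ⟨h₂, rfl⟩
  · rw [hφ1, hφ1]
    have e1 : ι₀ h₁ * (ι₀ h₂)⁻¹ = ι₀ (h₁ * h₂⁻¹) := by rw [map_mul, map_inv]
    have e2 : ι h₁ * (ι h₂)⁻¹ = ι (h₁ * h₂⁻¹) := by rw [map_mul, map_inv]
    rw [e1, e2]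
    constructor
    · rintro ⟨-, hm⟩; exact absurd hm (L2 _)
    · rintro ⟨-, hm⟩; exact absurd hm (M2 _)
  · rw [hφ1, hφ2]
    have e1 : ι₀ h₁ * (a⁻¹ * ι₀ h₂)⁻¹ = ι₀ (h₁ * h₂⁻¹) * a := by
      rw [map_mul, map_inv]; group
    have e2 : ι h₁ * (c * ι h₂)⁻¹ = ι (h₁ * h₂⁻¹) * c := by
      rw [map_mul, map_inv, mul_inv_rev, hcinv]; group
    rw [e1, e2, L1, M1]
    have n1 : ι₀ h₁ ≠ a⁻¹ * ι₀ h₂ := hdis₀ h₁ h₂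
    have n2 : ι h₁ ≠ c * ι h₂ := hdis h₁ h₂
    simp [n1, n2]
  · rw [hφ2, hφ1]
    have e1 : a⁻¹ * ι₀ h₁ * (ι₀ h₂)⁻¹ = a⁻¹ * ι₀ (h₁ * h₂⁻¹) := by
      rw [map_mul, map_inv]; group
    have e2 : c * ι h₁ * (ι h₂)⁻¹ = c * ι (h₁ * h₂⁻¹) := by
      rw [map_mul, map_inv]; group
    rw [e1, e2, L4, M4]
    have n1 : (a⁻¹ * ι₀ h₁ : G₀) ≠ ι₀ h₂ := fun he => hdis₀ h₂ h₁ he.symm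
    have n2 : (c * ι h₁ : G) ≠ ι h₂ := fun he => hdis h₂ h₁ he.symm
    simp [n1, n2]
  · rw [hφ2, hφ2]
    have e1 : a⁻¹ * ι₀ h₁ * (a⁻¹ * ι₀ h₂)⁻¹ = a⁻¹ * ι₀ (h₁ * h₂⁻¹) * a := by
      rw [map_mul, map_inv]; group
    have e2 : c * ι h₁ * (c * ι h₂)⁻¹ = c * ι (h₁ * h₂⁻¹) * c := by
      rw [map_mul, map_inv, mul_inv_rev, hcinv]; group
    rw [e1, e2]
    constructor
    · rintro ⟨-, hm⟩; exact absurd hm (L3 _)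
    · rintro ⟨-, hm⟩; exact absurd hm (M3 _)
end
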